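/- arXiv:1601.06723 — 2 statements merged into one kernel-verified Lean document; each statement's English description precedes it below -/
import Mathlib

section
/- For positive definite operators A (matrices) and arbitrary matrix K, the map (A, K) ↦ K* A⁻¹ K is jointly convex: for λ ∈ [0,1], (λK₁+(1-λ)K₂)* (λA₁+(1-λ)A₂)⁻¹ (λK₁+(1-λ)K₂) ≤ λ K₁* A₁⁻¹ K₁ + (1-λ) K₂* A₂⁻¹ K₂ in the Loewner order. -/
open Matrix
open scoped ComplexOrder Classical

/-- Square root of a positive semidefinite matrix, extended by `0`. -/
noncomputable def msqrt {n : Type*} [Fintype n] [DecidableEq n] (A : Matrix n n ℂ) :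
    Matrix n n ℂ :=
  if h : A.PosSemidef then
    h.1.eigenvectorUnitary.1 * diagonal ((↑) ∘ (√·) ∘ h.1.eigenvalues) *
      (star h.1.eigenvectorUnitary : Matrix n n ℂ)
  else 0

/-- Real power of a Hermitian matrix via the functional calculus, extended by `0`. -/
noncomputable def mrpow {n : Type*} [Fintype n] [DecidableEq n] (A : Matrix n n ℂ) (α : ℝ) :
    Matrix n n ℂ :=
  if h : A.IsHermitian then h.cfc (fun t => t ^ α) else 0

/-- A completely positive linear map between matrix algebras (Choi–Kraus form). -/
def IsCPMap {n m : Type*} [Fintype n] [Fintype m] (Φ : Matrix n n ℂ → Matrix m m ℂ) : Prop :=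
  ∃ (r : ℕ) (C : Fin r → Matrix n m ℂ), ∀ X, Φ X = ∑ i, (C i)ᴴ * X * C i

/-- The matrix geometric mean `A^{1/2} (A^{-1/2} B A^{-1/2})^{1/2} A^{1/2}`. -/
noncomputable def geomMean {n : Type*} [Fintype n] [DecidableEq n] (A B : Matrix n n ℂ) :
    Matrix n n ℂ :=
  msqrt A * msqrt ((msqrt A)⁻¹ * B * (msqrt A)⁻¹) * msqrt A

/-- The weighted geometric mean `B^{1/2} (B^{-1/2} A B^{-1/2})^α B^{1/2}`. -/
noncomputable def wgeomMean {n : Type*} [Fintype n] [DecidableEq n] (α : ℝ)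
    (A B : Matrix n n ℂ) : Matrix n n ℂ :=
  msqrt B * mrpow ((msqrt B)⁻¹ * A * (msqrt B)⁻¹) α * msqrt B

/-- The harmonic mean `2 (A⁻¹ + B⁻¹)⁻¹`. -/
noncomputable def harmMean {n : Type*} [Fintype n] [DecidableEq n] (A B : Matrix n n ℂ) :
    Matrix n n ℂ :=
  (2 : ℂ) • (A⁻¹ + B⁻¹)⁻¹

lemma psd_smul_real {n : Type*} [Fintype n] {A : Matrix n n ℂ} (hA : A.PosSemidef)
    {c : ℝ} (hc : 0 ≤ c) : ((c : ℂ) • A).PosSemidef := by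
  refine posSemidef_iff_dotProduct_mulVec.mpr ⟨?_, fun x => ?_⟩
  · have : ((c : ℂ) • A)ᴴ = star (c : ℂ) • Aᴴ := conjTranspose_smul _ _
    rw [Matrix.IsHermitian, this, Complex.star_def, Complex.conj_ofReal, hA.1]
  · rw [smul_mulVec, dotProduct_smul, smul_eq_mul]
    exact mul_nonneg (by exact_mod_cast hc) (hA.dotProduct_mulVec_nonneg x)

lemma pd_smul_real {n : Type*} [Fintype n] {A : Matrix n n ℂ} (hA : A.PosDef)
    {c : ℝ} (hc : 0 < c) : ((c : ℂ) • A).PosDef := by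
  refine posDef_iff_dotProduct_mulVec.mpr ⟨(psd_smul_real hA.posSemidef hc.le).1, fun x hx => ?_⟩
  rw [smul_mulVec, dotProduct_smul, smul_eq_mul]
  exact mul_pos (by exact_mod_cast hc) (hA.dotProduct_mulVec_pos hx)

lemma comb_posDef {n : Type*} [Fintype n] {A₁ A₂ : Matrix n n ℂ}
    (hA₁ : A₁.PosDef) (hA₂ : A₂.PosDef) {l : ℝ} (hl0 : 0 ≤ l) (hl1 : l ≤ 1) :
    ((l : ℂ) • A₁ + (1 - (l : ℂ)) • A₂).PosDef := by
  rcases eq_or_lt_of_le hl1 with h | h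
  · subst h; simpa using hA₁
  · have h2 : ((1 - l : ℝ) : ℂ) = 1 - (l : ℂ) := by push_cast; ring
    exact Matrix.PosDef.posSemidef_add (psd_smul_real hA₁.posSemidef hl0)
      (h2 ▸ pd_smul_real hA₂ (by linarith : (0:ℝ) < 1 - l))

/-- Lieb–Ruskai convexity: `(A, K) ↦ K* A⁻¹ K` is jointly convex. -/
theorem lieb_ruskai_convexity {n : Type*} [Fintype n] [DecidableEq n]
    (A₁ A₂ K₁ K₂ : Matrix n n ℂ) (hA₁ : A₁.PosDef) (hA₂ : A₂.PosDef)
    (l : ℝ) (hl0 : 0 ≤ l) (hl1 : l ≤ 1) :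
    (((l : ℂ) • (K₁ᴴ * A₁⁻¹ * K₁) + (1 - (l : ℂ)) • (K₂ᴴ * A₂⁻¹ * K₂)) -
      ((l : ℂ) • K₁ + (1 - (l : ℂ)) • K₂)ᴴ *
        ((l : ℂ) • A₁ + (1 - (l : ℂ)) • A₂)⁻¹ *
        ((l : ℂ) • K₁ + (1 - (l : ℂ)) • K₂)).PosSemidef := by
  have h2 : ((1 - l : ℝ) : ℂ) = 1 - (l : ℂ) := by push_cast; ring
  have i₁ : Invertible A₁ := hA₁.isUnit.invertible
  have i₂ : Invertible A₂ := hA₂.isUnit.invertible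
  have hM₁ : (fromBlocks A₁ K₁ K₁ᴴ (K₁ᴴ * A₁⁻¹ * K₁)).PosSemidef := by
    rw [PosDef.fromBlocks₁₁ _ _ hA₁]
    simpa using Matrix.PosSemidef.zero
  have hM₂ : (fromBlocks A₂ K₂ K₂ᴴ (K₂ᴴ * A₂⁻¹ * K₂)).PosSemidef := by
    rw [PosDef.fromBlocks₁₁ _ _ hA₂]
    simpa using Matrix.PosSemidef.zero
  have hsum := (psd_smul_real hM₁ hl0).add (h2 ▸ psd_smul_real hM₂ (by linarith : (0:ℝ) ≤ 1 - l))
  rw [fromBlocks_smul, fromBlocks_smul, fromBlocks_add] at hsum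
  have hA : ((l : ℂ) • A₁ + (1 - (l : ℂ)) • A₂).PosDef := comb_posDef hA₁ hA₂ hl0 hl1
  have iA : Invertible ((l : ℂ) • A₁ + (1 - (l : ℂ)) • A₂) := hA.isUnit.invertible
  have hKH : (l : ℂ) • K₁ᴴ + (1 - (l : ℂ)) • K₂ᴴ = ((l : ℂ) • K₁ + (1 - (l : ℂ)) • K₂)ᴴ := by
    simp [conjTranspose_add, conjTranspose_smul, Complex.star_def, map_sub,
      Complex.conj_ofReal]
  rw [hKH] at hsum
  exact (PosDef.fromBlocks₁₁ _ _ hA).mp hsum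
end

section
/- The harmonic mean H(A,B) = 2(A⁻¹+B⁻¹)⁻¹ of positive definite matrices is jointly concave: H(λA₁+(1-λ)A₂, λB₁+(1-λ)B₂) ≥ λH(A₁,B₁) + (1-λ)H(A₂,B₂). -/
open Matrix
open scoped ComplexOrder Classical

section aux
variable {n : Type*} [Fintype n] [DecidableEq n]

omit [DecidableEq n] in
lemma psd_smul {A : Matrix n n ℂ} (hA : A.PosSemidef) {c : ℝ} (hc : 0 ≤ c) :
    ((c : ℂ) • A).PosSemidef := by
  refine ⟨?_, fun x => ?_⟩
  · show _ = _
    rw [conjTranspose_smul, hA.1, Complex.star_def, Complex.conj_ofReal]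
  · exact (hA.smul (a := (c : ℂ)) (by exact_mod_cast hc)).2 x

omit [DecidableEq n] in
lemma pd_smul {A : Matrix n n ℂ} (hA : A.PosDef) {c : ℝ} (hc : 0 < c) :
    ((c : ℂ) • A).PosDef := by
  refine ⟨(psd_smul hA.posSemidef hc.le).1, fun x hx => ?_⟩
  exact (hA.smul (a := (c : ℂ)) (by exact_mod_cast hc)).2 hx

omit [DecidableEq n] in
lemma pd_convex {P Q : Matrix n n ℂ} (hP : P.PosDef) (hQ : Q.PosDef)
    {l : ℝ} (h0 : 0 ≤ l) (h1 : l ≤ 1) :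
    ((l : ℂ) • P + (1 - (l : ℂ)) • Q).PosDef := by
  have hc : (1 : ℂ) - (l : ℂ) = ((1 - l : ℝ) : ℂ) := by push_cast; ring
  rcases eq_or_lt_of_le h0 with h | h
  · simp [← h]
    exact hQ
  · rw [hc]
    exact (pd_smul hP h).add_posSemidef (psd_smul hQ.posSemidef (by linarith))

lemma harm_eq {A B : Matrix n n ℂ} (hA : A.PosDef) (hB : B.PosDef) :
    (A⁻¹ + B⁻¹)⁻¹ = A - A * (A + B)⁻¹ * A := by
  have hS : (A + B).PosDef := hA.add hB
  have hAi : A * A⁻¹ = 1 := mul_nonsing_inv A (isUnit_iff_isUnit_det A |>.1 hA.isUnit)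
  have hSi : (A + B)⁻¹ * (A + B) = 1 :=
    nonsing_inv_mul _ (isUnit_iff_isUnit_det _ |>.1 hS.isUnit)
  have hSA : (A + B)⁻¹ * A = 1 - (A + B)⁻¹ * B := by
    rw [mul_add] at hSi
    linear_combination (norm := noncomm_ring) hSi
  apply Matrix.inv_eq_left_inv
  have expand : (A - A * (A + B)⁻¹ * A) * (A⁻¹ + B⁻¹) =
      A * A⁻¹ + A * B⁻¹ - A * (A + B)⁻¹ * (A * A⁻¹) - A * ((A + B)⁻¹ * A) * B⁻¹ := by
    noncomm_ring
  rw [expand, hAi, hSA]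
  have hBi : B * B⁻¹ = 1 := mul_nonsing_inv B (isUnit_iff_isUnit_det B |>.1 hB.isUnit)
  have h2 : A * (1 - (A + B)⁻¹ * B) * B⁻¹ = A * B⁻¹ - A * (A + B)⁻¹ * (B * B⁻¹) := by
    noncomm_ring
  rw [h2, hBi]
  noncomm_ring

lemma block_psd {M X : Matrix n n ℂ} (hM : M.PosDef) (hX : X.IsHermitian) :
    (fromBlocks M X Xᴴ (X * M⁻¹ * X)).PosSemidef := by
  have := hM.isUnit.invertible
  rw [PosDef.fromBlocks₁₁ _ _ hM, hX.eq, sub_self]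
  exact PosSemidef.zero

end aux

/-- Joint concavity of the harmonic mean. -/
theorem harmMean_concave {n : Type*} [Fintype n] [DecidableEq n]
    (A₁ A₂ B₁ B₂ : Matrix n n ℂ)
    (hA₁ : A₁.PosDef) (hA₂ : A₂.PosDef) (hB₁ : B₁.PosDef) (hB₂ : B₂.PosDef)
    (l : ℝ) (hl0 : 0 ≤ l) (hl1 : l ≤ 1) :
    (harmMean ((l : ℂ) • A₁ + (1 - (l : ℂ)) • A₂) ((l : ℂ) • B₁ + (1 - (l : ℂ)) • B₂) -
      ((l : ℂ) • harmMean A₁ B₁ + (1 - (l : ℂ)) • harmMean A₂ B₂)).PosSemidef := by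
  have h1ml : (0 : ℝ) ≤ 1 - l := by linarith
  have h1ml_cast : (1 : ℂ) - (l : ℂ) = ((1 - l : ℝ) : ℂ) := by push_cast; ring
  have hM₁ : (A₁ + B₁).PosDef := hA₁.add hB₁
  have hM₂ : (A₂ + B₂).PosDef := hA₂.add hB₂
  have hAl : ((l : ℂ) • A₁ + (1 - (l : ℂ)) • A₂).PosDef := pd_convex hA₁ hA₂ hl0 hl1
  have hBl : ((l : ℂ) • B₁ + (1 - (l : ℂ)) • B₂).PosDef := pd_convex hB₁ hB₂ hl0 hl1
  have hM : ((l : ℂ) • (A₁ + B₁) + (1 - (l : ℂ)) • (A₂ + B₂)).PosDef :=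
    pd_convex hM₁ hM₂ hl0 hl1
  have hABM : ((l : ℂ) • A₁ + (1 - (l : ℂ)) • A₂) + ((l : ℂ) • B₁ + (1 - (l : ℂ)) • B₂) =
      (l : ℂ) • (A₁ + B₁) + (1 - (l : ℂ)) • (A₂ + B₂) := by module
  have hAlherm : ((l : ℂ) • A₁ + (1 - (l : ℂ)) • A₂)ᴴ = (l : ℂ) • A₁ + (1 - (l : ℂ)) • A₂ := by
    rw [conjTranspose_add, conjTranspose_smul, conjTranspose_smul, hA₁.1.eq, hA₂.1.eq]
    congr 1 <;> congr 1 <;>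
      simp [Complex.star_def, map_sub, Complex.conj_ofReal]
  have key₁ := block_psd (X := A₁) hM₁ hA₁.1
  have key₂ := block_psd (X := A₂) hM₂ hA₂.1
  have sum_psd := (psd_smul key₁ hl0).add (psd_smul key₂ h1ml)
  have hblock :
      ((l : ℝ) : ℂ) • fromBlocks (A₁ + B₁) A₁ A₁ᴴ (A₁ * (A₁ + B₁)⁻¹ * A₁) +
        ((1 - l : ℝ) : ℂ) • fromBlocks (A₂ + B₂) A₂ A₂ᴴ (A₂ * (A₂ + B₂)⁻¹ * A₂) =
      fromBlocks ((l : ℂ) • (A₁ + B₁) + (1 - (l : ℂ)) • (A₂ + B₂))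
        ((l : ℂ) • A₁ + (1 - (l : ℂ)) • A₂)
        ((l : ℂ) • A₁ + (1 - (l : ℂ)) • A₂)ᴴ
        ((l : ℂ) • (A₁ * (A₁ + B₁)⁻¹ * A₁) + (1 - (l : ℂ)) • (A₂ * (A₂ + B₂)⁻¹ * A₂)) := by
    rw [← h1ml_cast, fromBlocks_smul, fromBlocks_smul, fromBlocks_add,
      hA₁.1.eq, hA₂.1.eq, hAlherm]
  rw [hblock] at sum_psd
  have := hM.isUnit.invertible
  have hschur := (PosDef.fromBlocks₁₁ _ _ hM).1 sum_psd
  rw [hAlherm] at hschur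
  have hgoal_eq :
      harmMean ((l : ℂ) • A₁ + (1 - (l : ℂ)) • A₂) ((l : ℂ) • B₁ + (1 - (l : ℂ)) • B₂) -
        ((l : ℂ) • harmMean A₁ B₁ + (1 - (l : ℂ)) • harmMean A₂ B₂) =
      ((2 : ℝ) : ℂ) •
        (((l : ℂ) • (A₁ * (A₁ + B₁)⁻¹ * A₁) + (1 - (l : ℂ)) • (A₂ * (A₂ + B₂)⁻¹ * A₂)) -
          ((l : ℂ) • A₁ + (1 - (l : ℂ)) • A₂) *
            ((l : ℂ) • (A₁ + B₁) + (1 - (l : ℂ)) • (A₂ + B₂))⁻¹ *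
            ((l : ℂ) • A₁ + (1 - (l : ℂ)) • A₂)) := by
    unfold harmMean
    rw [harm_eq hAl hBl, harm_eq hA₁ hB₁, harm_eq hA₂ hB₂, hABM]
    push_cast
    module
  rw [hgoal_eq]
  exact psd_smul hschur (by norm_num)
end
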